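/- Let F be a field, and let A_xx be an n×n matrix, A an n×v matrix, and P an n×k matrix over F. Assume that the v×v matrix Aᵀ*A is invertible. Define, for λ ∈ F, the matrices Ω(λ) = [(λ•1 − A_xx)*P | A] (an n×(k+v) matrix formed by horizontal concatenation) and Θ(λ) = (1 − A*(Aᵀ*A)⁻¹*Aᵀ)*(λ•1 − A_xx)*P (an n×k matrix). Then for every λ ∈ F, Ω(λ) is of full column rank if and only if Θ(λ) is of full column rank. -/

import Mathlib

open Matrix

/-- If `Aᵀ * A` is invertible, then for every `λ` the matrix
`Ω(λ) = [(λ•1 − A_xx)*P | A]` is of full column rank iff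
`Θ(λ) = (1 − A*(Aᵀ*A)⁻¹*Aᵀ)*(λ•1 − A_xx)*P` is. -/
theorem stmt10 {F : Type*} [Field F] {n v k : ℕ}
    (Axx : Matrix (Fin n) (Fin n) F) (A : Matrix (Fin n) (Fin v) F)
    (P : Matrix (Fin n) (Fin k) F)
    (hA : IsUnit (Aᵀ * A)) :
    ∀ l : F,
      Function.Injective (Matrix.fromCols ((l • 1 - Axx) * P) A).mulVecLin ↔
      Function.Injective
        ((1 - A * (Aᵀ * A)⁻¹ * Aᵀ) * ((l • 1 - Axx) * P)).mulVecLin := by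
  intro l
  set B := (l • 1 - Axx) * P with hB
  have hdet : IsUnit (Aᵀ * A).det := (Matrix.isUnit_iff_isUnit_det _).mp hA
  have hinv : (Aᵀ * A)⁻¹ * (Aᵀ * A) = 1 := Matrix.nonsing_inv_mul _ hdet
  have hAinj : ∀ y : Fin v → F, A *ᵥ y = 0 → y = 0 := by
    intro y hy
    have h1 : (Aᵀ * A) *ᵥ y = 0 := by
      rw [← Matrix.mulVec_mulVec, hy, Matrix.mulVec_zero]
    have := Matrix.mulVec_injective_iff_isUnit.mpr hA
    have h0 : (Aᵀ * A) *ᵥ (0 : Fin v → F) = 0 := Matrix.mulVec_zero _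
    exact this (h1.trans h0.symm)
  rw [injective_iff_map_eq_zero, injective_iff_map_eq_zero]
  constructor
  · intro h x hx
    simp only [Matrix.mulVecLin_apply] at hx ⊢
    -- hx : (1 - A*(AᵀA)⁻¹*Aᵀ) * B *ᵥ x = 0
    have hx' : B *ᵥ x - A *ᵥ (((Aᵀ * A)⁻¹ * Aᵀ * B) *ᵥ x) = 0 := by
      have := hx
      rw [Matrix.sub_mul, Matrix.one_mul, Matrix.sub_mulVec] at this
      simpa [Matrix.mulVec_mulVec, Matrix.mul_assoc] using this
    have key : (Matrix.fromCols B A).mulVecLin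
        (Sum.elim x (-(((Aᵀ * A)⁻¹ * Aᵀ * B) *ᵥ x))) = 0 := by
      simp only [Matrix.mulVecLin_apply, Matrix.fromCols_mulVec_sumElim,
        Matrix.mulVec_neg]
      rw [← sub_eq_add_neg]
      exact hx'
    have := h _ key
    have hx0 : x = 0 := by
      have := congrArg (fun f => f ∘ Sum.inl) this
      funext i
      exact congrFun this i
    exact hx0
  · intro h z hz
    simp only [Matrix.mulVecLin_apply] at hz ⊢
    obtain ⟨x, y, rfl⟩ : ∃ x y, z = Sum.elim x y :=
      ⟨z ∘ Sum.inl, z ∘ Sum.inr, by funext i; cases i <;> rfl⟩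
    rw [Matrix.fromCols_mulVec_sumElim] at hz
    have hx : ((1 - A * (Aᵀ * A)⁻¹ * Aᵀ) * B) *ᵥ x = 0 := by
      have h2 : (1 - A * (Aᵀ * A)⁻¹ * Aᵀ) *ᵥ (B *ᵥ x + A *ᵥ y) = 0 := by
        rw [hz, Matrix.mulVec_zero]
      rw [Matrix.mulVec_add] at h2
      have hPA : (1 - A * (Aᵀ * A)⁻¹ * Aᵀ) *ᵥ (A *ᵥ y) = 0 := by
        rw [Matrix.mulVec_mulVec, Matrix.sub_mul, Matrix.one_mul,
          Matrix.mul_assoc, Matrix.mul_assoc, hinv, Matrix.mul_one, sub_self,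
          Matrix.zero_mulVec]
      rw [hPA, add_zero, Matrix.mulVec_mulVec] at h2
      exact h2
    have hx0 : x = 0 := h x (by simpa only [Matrix.mulVecLin_apply] using hx)
    subst hx0
    have hy0 : y = 0 := by
      apply hAinj
      simpa using hz
    rw [hy0]
    funext i
    cases i <;> rfl
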